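/- Let A be a C*-algebra and P : A → A a faithful positive idempotent Schwarz map. Then P is a conditional expectation onto its range: P(yxz) = y P(x) z for all y, z ∈ ran P and x ∈ A; in particular ran P is closed under multiplication, so it is a C*-subalgebra of A. -/

import Mathlib

open ComplexStarModule


/-- A faithful positive idempotent Schwarz map `P` on a C*-algebra is a conditional expectation
onto its range: `P(yxz) = y P(x) z` for `y, z ∈ ran P`; in particular the range is closed
under multiplication. -/
theorem faithful_idempotent_schwarz_is_conditional_expectation
    {A : Type*} [NormedRing A] [StarRing A] [CStarRing A] [NormedAlgebra ℂ A] [StarModule ℂ A]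
    [PartialOrder A] [StarOrderedRing A] [CompleteSpace A]
    (P : A →ₗ[ℂ] A)
    (hidem : ∀ x : A, P (P x) = P x)
    (hpos : ∀ x : A, 0 ≤ x → 0 ≤ P x)
    (hschwarz : ∀ x : A, star (P x) * P x ≤ P (star x * x))
    (hfaithful : ∀ x : A, 0 ≤ x → P x = 0 → x = 0) :
    (∀ y ∈ Set.range P, ∀ z ∈ Set.range P, ∀ x : A, P (y * x * z) = y * P x * z) ∧
    (∀ y ∈ Set.range P, ∀ z ∈ Set.range P, y * z ∈ Set.range P) := by
  letI : CStarAlgebra A := { ‹NormedRing A›, ‹StarRing A›, ‹CStarRing A›, ‹NormedAlgebra ℂ A›,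
    ‹StarModule ℂ A›, ‹CompleteSpace A› with }
  -- P preserves selfadjointness
  have hsa : ∀ a : A, IsSelfAdjoint a → IsSelfAdjoint (P a) := by
    intro a ha
    have h1 : P a = P (a⁺) - P (a⁻) := by
      rw [← map_sub, CFC.posPart_sub_negPart a ha]
    rw [h1]
    exact ((hpos _ (CFC.posPart_nonneg a)).isSelfAdjoint).sub
      ((hpos _ (CFC.negPart_nonneg a)).isSelfAdjoint)
  -- P is star-preserving
  have hstar : ∀ x : A, P (star x) = star (P x) := by
    intro x
    have hx : (ℜ x : A) + Complex.I • (ℑ x : A) = x := realPart_add_I_smul_imaginaryPart x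
    have hsx : star x = (ℜ x : A) - Complex.I • (ℑ x : A) := by
      conv_lhs => rw [← hx]
      rw [star_add, star_smul, (ℜ x).2.star_eq, (ℑ x).2.star_eq]
      simp [sub_eq_add_neg]
    have hre := (hsa _ (ℜ x).2).star_eq
    have him := (hsa _ (ℑ x).2).star_eq
    rw [hsx, map_sub, map_smul]
    conv_rhs => rw [← hx]
    rw [map_add, map_smul, star_add, star_smul, hre, him]
    simp [sub_eq_add_neg]
  -- elements of the range are fixed points
  have hfix : ∀ y ∈ Set.range P, P y = y := by
    rintro y ⟨w, rfl⟩; exact hidem w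
  -- closed positivity limit lemma
  have key0 : ∀ C S : A, (∀ s : ℝ, 0 ≤ C + s • S) → S = 0 := by
    intro C S h
    have hlim : ∀ T : A, Filter.Tendsto (fun n : ℕ => ((n : ℝ) + 1)⁻¹ • C + T)
        Filter.atTop (nhds T) := by
      intro T
      have h0 : Filter.Tendsto (fun n : ℕ => ((n : ℝ) + 1)⁻¹ • C) Filter.atTop (nhds 0) := by
        have := (tendsto_one_div_add_atTop_nhds_zero_nat :
          Filter.Tendsto (fun n : ℕ => 1 / ((n : ℝ) + 1)) Filter.atTop (nhds 0))
        have := this.smul_const C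
        simpa [one_div] using this
      simpa using h0.add tendsto_const_nhds
    have hmem : ∀ T : A, (∀ n : ℕ, 0 ≤ ((n : ℝ) + 1)⁻¹ • C + T) → 0 ≤ T := by
      intro T hT
      have := CStarAlgebra.isClosed_nonneg (A := A)
      exact this.mem_of_tendsto (hlim T) (Filter.Eventually.of_forall hT)
    have hS : 0 ≤ S := by
      refine hmem S fun n => ?_
      have h1 := h ((n : ℝ) + 1)
      have h2 := smul_nonneg (by positivity : (0:ℝ) ≤ ((n : ℝ) + 1)⁻¹) h1
      have h3 : ((n : ℝ) + 1)⁻¹ • (C + ((n : ℝ) + 1) • S)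
          = ((n : ℝ) + 1)⁻¹ • C + S := by
        rw [smul_add, smul_smul, inv_mul_cancel₀ (by positivity)]
        simp
      rwa [h3] at h2
    have hnS : 0 ≤ -S := by
      refine hmem (-S) fun n => ?_
      have h1 := h (-((n : ℝ) + 1))
      have h2 := smul_nonneg (by positivity : (0:ℝ) ≤ ((n : ℝ) + 1)⁻¹) h1
      have h3 : ((n : ℝ) + 1)⁻¹ • (C + (-((n : ℝ) + 1)) • S)
          = ((n : ℝ) + 1)⁻¹ • C + -S := by
        rw [smul_add, smul_smul]
        rw [show ((n : ℝ) + 1)⁻¹ * -((n : ℝ) + 1) = -1 by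
          field_simp]
        simp
      rwa [h3] at h2
    exact le_antisymm (neg_nonneg.mp hnS) hS
  -- equality in Schwarz for fixed points
  have hsq : ∀ y : A, P y = y → P (star y * y) = star y * y := by
    intro y hy
    have h0 : star y * y ≤ P (star y * y) := by simpa [hy] using hschwarz y
    have hd : (0:A) ≤ P (star y * y) - star y * y := sub_nonneg.mpr h0
    have hPd : P (P (star y * y) - star y * y) = 0 := by
      rw [map_sub, hidem, sub_self]
    exact (sub_eq_zero.mp (hfaithful _ hd hPd)).symm ▸ rfl
  -- multiplicative domain property for fixed points
  have hmul : ∀ y : A, P y = y → ∀ x : A,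
      P (star x * y) = star (P x) * y ∧ P (star y * x) = star y * P x := by
    intro y hy x
    set C := P (star x * x) - star (P x) * P x with hC
    set E₁ := P (star x * y) - star (P x) * y with hE₁
    set E₂ := P (star y * x) - star y * P x with hE₂
    have hyy : P (star y * y) = star y * y := hsq y hy
    have claim : ∀ t : ℂ, 0 ≤ C + t • E₁ + star t • E₂ := by
      intro t
      have h1 := hschwarz (x + t • y)
      have expand : P (star (x + t • y) * (x + t • y)) - star (P (x + t • y)) * P (x + t • y)
          = C + t • E₁ + star t • E₂ := by
        have e1 : star (x + t • y) * (x + t • y)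
            = star x * x + t • (star x * y) + star t • (star y * x)
              + (star t * t) • (star y * y) := by
          simp only [star_add, star_smul, add_mul, mul_add, smul_mul_assoc, mul_smul_comm,
            smul_smul]
          module
        have e2 : P (star (x + t • y) * (x + t • y))
            = P (star x * x) + t • P (star x * y) + star t • P (star y * x)
              + (star t * t) • (star y * y) := by
          rw [e1]
          simp only [map_add, map_smul, hyy]
        have e3 : star (P (x + t • y)) * P (x + t • y)
            = star (P x) * P x + t • (star (P x) * y) + star t • (star y * P x)
              + (star t * t) • (star y * y) := by
          rw [map_add, map_smul, star_add, star_smul, hy]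
          simp only [add_mul, mul_add, smul_mul_assoc, mul_smul_comm, smul_smul]
          module
        rw [e2, e3, hC, hE₁, hE₂]
        module
      rw [← expand]
      exact sub_nonneg.mpr h1
    have hsum : E₁ + E₂ = 0 := by
      apply key0 C
      intro s
      have h1 := claim (s : ℂ)
      have h2 : C + (s : ℂ) • E₁ + star (s : ℂ) • E₂ = C + s • (E₁ + E₂) := by
        rw [Complex.star_def, Complex.conj_ofReal, Complex.coe_smul, Complex.coe_smul,
          smul_add, add_assoc]
      rwa [h2] at h1
    have hdiff : E₁ = E₂ := by
      have hI : Complex.I • (E₁ - E₂) = 0 := by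
        apply key0 C
        intro s
        have h1 := claim ((s : ℂ) * Complex.I)
        have h2 : C + ((s : ℂ) * Complex.I) • E₁ + star ((s : ℂ) * Complex.I) • E₂
            = C + s • (Complex.I • (E₁ - E₂)) := by
          rw [star_mul', Complex.star_def, Complex.conj_ofReal, Complex.conj_I,
            ← Complex.coe_smul s (Complex.I • (E₁ - E₂))]
          module
        rwa [h2] at h1
      have := smul_eq_zero.mp hI
      rcases this with h | h
      · exact absurd h Complex.I_ne_zero
      · exact sub_eq_zero.mp h
    have hE₁0 : E₁ = 0 := by
      have h2 : (2 : ℂ) • E₁ = 0 := by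
        rw [two_smul]
        nth_rewrite 2 [hdiff]
        exact hsum
      rcases smul_eq_zero.mp h2 with h | h
      · norm_num at h
      · exact h
    have hE₂0 : E₂ = 0 := hdiff ▸ hE₁0
    exact ⟨sub_eq_zero.mp hE₁0, sub_eq_zero.mp hE₂0⟩
  -- left and right module properties
  have hleft : ∀ y : A, P y = y → ∀ v : A, P (y * v) = y * P v := by
    intro y hy v
    have hys : P (star y) = star y := by rw [hstar, hy]
    have h := (hmul (star y) hys v).2
    rwa [star_star] at h
  have hright : ∀ z : A, P z = z → ∀ v : A, P (v * z) = P v * z := by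
    intro z hz v
    have h := (hmul z hz (star v)).1
    rwa [star_star, hstar, star_star] at h
  constructor
  · intro y hy z hz x
    have hy' := hfix y hy
    have hz' := hfix z hz
    rw [mul_assoc, hleft y hy' (x * z), hright z hz' x, ← mul_assoc]
  · intro y hy z hz
    exact ⟨y * z, by rw [hleft y (hfix y hy) z, hfix z hz]⟩
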